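/- Let φ be a nilpotent R-endomorphism of a finitely generated semisimple left R-module M with Jordan normal base indexed by finite Γ with block sizes k_γ, and let Φ be the associated surjection. For every ψ ∈ Hom_R(M,M) with ψ∘φ = φ∘ψ there exists a matrix P ∈ M(Φ) whose (δ,γ) entry has degree ≤ k_γ − 1, such that ψ(Φ(f)) = Φ(fP) for all f ∈ (R[t])^Γ. -/

import Mathlib

open Polynomial

/-- A nilpotent Jordan normal base of the left `R`-module `M` with respect to the
endomorphism `φ`: a family `x γ i` (`γ ∈ Γ`, `0 ≤ i < k γ`, 0-based indexing) such that
each `R • x γ i` is a simple submodule, `M` is the internal direct sum of these submodules,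
`φ` shifts within each block (annihilating the last element, i.e. `x γ i = 0` for `i ≥ k γ`),
and the block sizes `k γ` are bounded. -/
structure IsNilpotentJordanBase {R : Type*} [Ring R] {M : Type*} [AddCommGroup M] [Module R M]
    (φ : Module.End R M) {Γ : Type*} (k : Γ → ℕ) (x : Γ → ℕ → M) : Prop where
  k_pos : ∀ γ, 1 ≤ k γ
  simple : ∀ γ, ∀ i < k γ, IsSimpleModule R ↥(Submodule.span R {x γ i})
  indep : iSupIndep fun p : Σ γ : Γ, Fin (k γ) => Submodule.span R {x p.1 p.2.val}
  spans : (⨆ p : Σ γ : Γ, Fin (k γ), Submodule.span R {x p.1 p.2.val}) = ⊤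
  step : ∀ γ i, φ (x γ i) = x γ (i + 1)
  zero_after : ∀ γ i, k γ ≤ i → x γ i = 0
  bounded : ∃ n, ∀ γ, k γ ≤ n

/-- The action of a polynomial `f = a₁ + a₂ t + ⋯ + a_{n+1} tⁿ ∈ R[t]` on `u ∈ M` induced by
the endomorphism `φ`: `f ∗ u = a₁ u + a₂ φ(u) + ⋯ + a_{n+1} φⁿ(u)`. -/
noncomputable def polyAction {R : Type*} [Ring R] {M : Type*} [AddCommGroup M] [Module R M]
    (φ : Module.End R M) (f : Polynomial R) (u : M) : M :=
  f.sum fun i a => a • (φ ^ i) u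

/-- The map `Φ : (R[t])^Γ → M`, `Φ((f_γ)_γ) = Σ_γ f_γ(t) ∗ x_{γ,1}`, associated to a
nilpotent Jordan normal base `x` with finite block set `Γ`. -/
noncomputable def jordanPhiF {R : Type*} [Ring R] {M : Type*} [AddCommGroup M] [Module R M]
    (φ : Module.End R M) {Γ : Type*} [Fintype Γ] (x : Γ → ℕ → M) (f : Γ → Polynomial R) : M :=
  ∑ γ, polyAction φ (f γ) (x γ 0)


section Lemmas
variable {R : Type*} [Ring R] {M : Type*} [AddCommGroup M] [Module R M] (φ : Module.End R M)

lemma polyAction_monomial (n : ℕ) (a : R) (u : M) :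
    polyAction φ (monomial n a) u = a • (φ ^ n) u := by
  unfold polyAction
  rw [Polynomial.sum_monomial_index]
  simp

lemma polyAction_add_left (f g : Polynomial R) (u : M) :
    polyAction φ (f + g) u = polyAction φ f u + polyAction φ g u := by
  unfold polyAction
  rw [Polynomial.sum_add_index] <;> simp [add_smul]

lemma polyAction_zero_left (u : M) : polyAction φ 0 u = 0 := by
  simp [polyAction]

lemma polyAction_sum_left {ι : Type*} (s : Finset ι) (g : ι → Polynomial R) (u : M) :
    polyAction φ (∑ i ∈ s, g i) u = ∑ i ∈ s, polyAction φ (g i) u := by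
  classical
  induction s using Finset.induction_on with
  | empty => simp [polyAction_zero_left]
  | insert _ _ hx ih => simp_all [polyAction_add_left, Finset.sum_insert hx]

lemma polyAction_add_right (f : Polynomial R) (u v : M) :
    polyAction φ f (u + v) = polyAction φ f u + polyAction φ f v := by
  simp [polyAction, Polynomial.sum, smul_add, Finset.sum_add_distrib]

lemma polyAction_sum_right {ι : Type*} (s : Finset ι) (f : Polynomial R) (u : ι → M) :
    polyAction φ f (∑ i ∈ s, u i) = ∑ i ∈ s, polyAction φ f (u i) := by
  classical
  induction s using Finset.induction_on with
  | empty => simp [polyAction, Polynomial.sum]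
  | insert _ _ hx ih => simp_all [polyAction_add_right, Finset.sum_insert hx]

lemma polyAction_mul (f g : Polynomial R) (u : M) :
    polyAction φ (f * g) u = polyAction φ f (polyAction φ g u) := by
  induction f using Polynomial.induction_on' with
  | add p q hp hq => simp [add_mul, polyAction_add_left, hp, hq]
  | monomial n a =>
    induction g using Polynomial.induction_on' with
    | add p q hp hq =>
      simp [mul_add, polyAction_add_left, polyAction_add_right, hp, hq]
    | monomial m b =>
      rw [monomial_mul_monomial, polyAction_monomial, polyAction_monomial,
        polyAction_monomial, pow_add, Module.End.mul_apply, map_smul, smul_smul]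

lemma polyAction_comm (ψ : Module.End R M) (hψ : ψ * φ = φ * ψ)
    (f : Polynomial R) (u : M) :
    ψ (polyAction φ f u) = polyAction φ f (ψ u) := by
  unfold polyAction Polynomial.sum
  rw [map_sum]
  refine Finset.sum_congr rfl fun i _ => ?_
  rw [map_smul]
  congr 1
  have hc : Commute ψ φ := hψ
  have := (hc.pow_right i).eq
  calc ψ ((φ ^ i) u) = (ψ * φ ^ i) u := rfl
    _ = (φ ^ i * ψ) u := by rw [this]
    _ = (φ ^ i) (ψ u) := rfl

end Lemmas

/-- For every `ψ` commuting with `φ` there is a matrix `P ∈ M(Φ)` whose `(δ,γ)` entry has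
degree `≤ k γ - 1` such that `ψ(Φ(f)) = Φ(fP)` for all `f ∈ (R[t])^Γ`. -/
theorem stmt_12 {R : Type*} [Ring R] {M : Type*} [AddCommGroup M] [Module R M]
    [Module.Finite R M] [IsSemisimpleModule R M]
    (φ : Module.End R M) {Γ : Type*} [Fintype Γ] [DecidableEq Γ] (k : Γ → ℕ) (x : Γ → ℕ → M)
    (h : IsNilpotentJordanBase φ k x)
    (ψ : Module.End R M) (hψ : ψ * φ = φ * ψ) :
    ∃ P : Matrix Γ Γ (Polynomial R),
      (∀ δ γ, (P δ γ).degree < (k γ : ℕ)) ∧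
      (∀ f : Γ → Polynomial R, jordanPhiF φ x f = 0 → jordanPhiF φ x (Matrix.vecMul f P) = 0) ∧
      (∀ f : Γ → Polynomial R, ψ (jordanPhiF φ x f) = jordanPhiF φ x (Matrix.vecMul f P)) := by
    classical
  -- φ^i applied to the block generator gives the i-th basis element
  have hx : ∀ γ (i : ℕ), (φ ^ i) (x γ 0) = x γ i := by
    intro γ i
    induction i with
    | zero => rfl
    | succ n ih =>
      rw [pow_succ', Module.End.mul_apply, ih, h.step]
  -- every element is a finite R-combination of the basis
  have hrep : ∀ u : M, ∃ c : (Σ γ : Γ, Fin (k γ)) → R,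
      ∑ p : Σ γ : Γ, Fin (k γ), c p • x p.1 p.2.val = u := by
    intro u
    have hsp : Submodule.span R (Set.range fun p : Σ γ : Γ, Fin (k γ) => x p.1 p.2.val) = ⊤ := by
      rw [Submodule.span_range_eq_iSup]
      exact h.spans
    have : u ∈ Submodule.span R (Set.range fun p : Σ γ : Γ, Fin (k γ) => x p.1 p.2.val) := by
      rw [hsp]; trivial
    exact Submodule.mem_span_range_iff_exists_fun R |>.mp this
  choose c hc using fun δ => hrep (ψ (x δ 0))
  refine ⟨fun δ γ => ∑ i : Fin (k γ), monomial (i : ℕ) (c δ ⟨γ, i⟩), ?_, ?_, ?_⟩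
  · intro δ γ
    refine lt_of_le_of_lt (degree_sum_le _ _) ?_
    rw [Finset.sup_lt_iff (by exact_mod_cast WithBot.bot_lt_coe (k γ))]
    intro i _
    exact lt_of_le_of_lt (degree_monomial_le _ _) (by exact_mod_cast i.isLt)
  all_goals
    have key : ∀ f : Γ → Polynomial R,
        ψ (jordanPhiF φ x f) = jordanPhiF φ x (Matrix.vecMul f
          fun δ γ => ∑ i : Fin (k γ), monomial (i : ℕ) (c δ ⟨γ, i⟩)) := by
      intro f
      have hP : ∀ δ γ, polyAction φ (∑ i : Fin (k γ), monomial (i : ℕ) (c δ ⟨γ, i⟩)) (x γ 0)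
          = ∑ i : Fin (k γ), c δ ⟨γ, i⟩ • x γ (i : ℕ) := by
        intro δ γ
        rw [polyAction_sum_left]
        refine Finset.sum_congr rfl fun i _ => ?_
        rw [polyAction_monomial, hx]
      have hpsix : ∀ δ, ψ (x δ 0) = ∑ γ,
          polyAction φ (∑ i : Fin (k γ), monomial (i : ℕ) (c δ ⟨γ, i⟩)) (x γ 0) := by
        intro δ
        rw [← hc δ, ← Finset.univ_sigma_univ, Finset.sum_sigma]
        exact (Finset.sum_congr rfl fun γ _ => (hP δ γ).symm)
      unfold jordanPhiF
      rw [map_sum]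
      calc ∑ γ, ψ (polyAction φ (f γ) (x γ 0))
          = ∑ δ, polyAction φ (f δ) (ψ (x δ 0)) :=
            Finset.sum_congr rfl fun δ _ => polyAction_comm φ ψ hψ _ _
        _ = ∑ δ, ∑ γ, polyAction φ (f δ)
              (polyAction φ (∑ i : Fin (k γ), monomial (i : ℕ) (c δ ⟨γ, i⟩)) (x γ 0)) := by
            refine Finset.sum_congr rfl fun δ _ => ?_
            rw [hpsix δ, polyAction_sum_right]
        _ = ∑ γ, ∑ δ, polyAction φ
              (f δ * ∑ i : Fin (k γ), monomial (i : ℕ) (c δ ⟨γ, i⟩)) (x γ 0) := by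
            rw [Finset.sum_comm]
            exact Finset.sum_congr rfl fun γ _ => Finset.sum_congr rfl fun δ _ =>
              (polyAction_mul φ _ _ _).symm
        _ = ∑ γ, polyAction φ (Matrix.vecMul f
              (fun δ γ => ∑ i : Fin (k γ), monomial (i : ℕ) (c δ ⟨γ, i⟩)) γ) (x γ 0) := by
            refine Finset.sum_congr rfl fun γ _ => ?_
            simp only [Matrix.vecMul, dotProduct]; rw [polyAction_sum_left]
  · intro f hf
    rw [← key f, hf, map_zero]
  · exact key
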